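/- arXiv:2105.01207 — 2 statements merged into one kernel-verified Lean document; each statement's English description precedes it below -/
import Mathlib

section
/- Let S_c = {c·w : w ∈ S} where S = {w ∈ ℂ : 0 < Im w < π} and c ≠ 0 with arg(c) = θ ∈ (-π/2, π/2). Then the exponential map is injective on S_c if and only if |c| ≤ 2 cos θ, equivalently |c - 1| ≤ 1. -/
open Real

/-- for `c ≠ 0` with `arg c ∈ (-π/2, π/2)`, the exponential map is injective
on `S_c = c · S`, `S` the strip `0 < Im w < π`, iff `|c| ≤ 2 cos (arg c)`, equivalently
iff `|c - 1| ≤ 1`. -/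
theorem stmt_8 (c : ℂ) (hc : c ≠ 0) (hθ : c.arg ∈ Set.Ioo (-(π / 2)) (π / 2)) :
    (Set.InjOn Complex.exp ((fun w => c * w) '' {w : ℂ | 0 < w.im ∧ w.im < π}) ↔
      ‖c‖ ≤ 2 * Real.cos c.arg) ∧
    (‖c‖ ≤ 2 * Real.cos c.arg ↔ ‖c - 1‖ ≤ 1) := by
  have hcos : 0 < Real.cos c.arg := Real.cos_pos_of_mem_Ioo hθ
  have habs : 0 < ‖c‖ := norm_pos_iff.mpr hc
  have hre : c.re = ‖c‖ * Real.cos c.arg := by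
    rw [Complex.cos_arg hc]; field_simp
  have hrepos : 0 < c.re := by rw [hre]; positivity
  have hnsq : 0 < Complex.normSq c := Complex.normSq_pos.mpr hc
  have hsq : Complex.normSq c = ‖c‖ * ‖c‖ := by
    rw [Complex.normSq_eq_norm_sq]; ring
  -- pivot condition
  have hpivot : (‖c‖ ≤ 2 * Real.cos c.arg) ↔ Complex.normSq c ≤ 2 * c.re := by
    rw [hsq, hre]
    constructor
    · intro h; nlinarith
    · intro h; nlinarith
  have hpivot2 : (Complex.normSq c ≤ 2 * c.re) ↔ ‖c - 1‖ ≤ 1 := by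
    have hnsq1 : Complex.normSq (c - 1) = Complex.normSq c - 2 * c.re + 1 := by
      simp [Complex.normSq_apply, Complex.sub_re, Complex.sub_im]; ring
    have h1 : Complex.normSq (c - 1) = ‖c - 1‖ * ‖c - 1‖ := by
      rw [Complex.normSq_eq_norm_sq]; ring
    have hnn : 0 ≤ ‖c - 1‖ := norm_nonneg _
    constructor
    · intro h; nlinarith
    · intro h; nlinarith
  refine ⟨?_, hpivot.trans hpivot2⟩
  rw [hpivot]
  constructor
  · -- injectivity → normSq c ≤ 2 c.re
    intro hinj
    by_contra hlt
    push_neg at hlt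
    set t : ℝ := 2 * π * c.re / Complex.normSq c with ht
    have htpos : 0 < t := by positivity
    have htlt : t < π := by
      rw [ht, div_lt_iff₀ hnsq]
      nlinarith [Real.pi_pos]
    set w2 : ℂ := ((π - t) / 2 : ℝ) * Complex.I with hw2
    set w1 : ℂ := w2 + 2 * π * Complex.I / c with hw1
    have him2 : w2.im = (π - t) / 2 := by simp [hw2]
    have himd : (2 * π * Complex.I / c).im = t := by
      rw [ht]; simp [Complex.div_im, Complex.mul_im, Complex.mul_re]
    have him1 : w1.im = (π - t) / 2 + t := by
      rw [hw1, Complex.add_im, him2, himd]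
    have hm2 : w2 ∈ {w : ℂ | 0 < w.im ∧ w.im < π} := by
      constructor <;> rw [him2] <;> linarith
    have hm1 : w1 ∈ {w : ℂ | 0 < w.im ∧ w.im < π} := by
      constructor <;> rw [him1] <;> linarith
    have hcw : c * w1 = c * w2 + 2 * π * Complex.I := by
      rw [hw1]; field_simp
    have hexp : Complex.exp (c * w1) = Complex.exp (c * w2) := by
      rw [hcw, Complex.exp_add, Complex.exp_two_pi_mul_I, mul_one]
    have heq := hinj ⟨w1, hm1, rfl⟩ ⟨w2, hm2, rfl⟩ hexp
    simp only at heq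
    rw [hcw] at heq
    have h2pi : (2 * (π : ℂ) * Complex.I) = 0 := by linear_combination heq
    have him0 := congrArg Complex.im h2pi
    simp at him0
  · -- normSq c ≤ 2 c.re → injectivity
    intro hle
    rintro z1 ⟨w1, ⟨h1a, h1b⟩, rfl⟩ z2 ⟨w2, ⟨h2a, h2b⟩, rfl⟩ hexp
    simp only at *
    obtain ⟨n, hn⟩ := Complex.exp_eq_exp_iff_exists_int.mp hexp
    have hw : w1 = w2 + n * (2 * π * Complex.I) / c := by
      have : c * w1 = c * (w2 + n * (2 * π * Complex.I) / c) := by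
        rw [hn]; field_simp
      exact mul_left_cancel₀ hc this
    set q : ℝ := 2 * π * c.re / Complex.normSq c with hq
    have himd : ((n : ℂ) * (2 * π * Complex.I) / c).im = n * q := by
      rw [hq]; simp [Complex.div_im, Complex.mul_im, Complex.mul_re]; ring
    have him : w1.im = w2.im + n * q := by
      rw [hw, Complex.add_im, himd]
    have hqpi : π ≤ q := by
      rw [hq, le_div_iff₀ hnsq]
      nlinarith [Real.pi_pos]
    have hn0 : n = 0 := by
      rcases lt_trichotomy n 0 with h | h | h
      · have : (n : ℝ) ≤ -1 := by exact_mod_cast (show n ≤ -1 by omega)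
        nlinarith [Real.pi_pos]
      · exact h
      · have : (1 : ℝ) ≤ (n : ℝ) := by exact_mod_cast h
        nlinarith [Real.pi_pos]
    rw [hn, hn0]
    simp
end

section
/- Let v : ℝⁿ → ℝⁿ be a locally Lipschitz bounded vector field generating a flow, and let γ : [0,∞) → ℝⁿ be a C¹ path with precompact image such that γ'(t) - v(γ(t)) → 0 as t → ∞. If p is an accumulation point of γ(t) as t → ∞ and p is an asymptotically stable (attracting) equilibrium of v whose basin contains a neighborhood of p in which p is the only point of the accumulation set, then γ(t) → p as t → ∞. -/
open Filter Topology

/-- let `v` be a locally Lipschitz bounded vector field on `ℝⁿ` and `γ` a C¹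
path with precompact image with `γ'(t) - v(γ(t)) → 0` as `t → ∞`. If `p` is an
accumulation point of `γ` at infinity, is an attracting equilibrium of `v` (every integral
curve of `v` starting in some neighborhood of `p` converges to `p`), and has a
neighborhood in which it is the only accumulation point of `γ`, then `γ(t) → p`. -/
theorem stmt_18 (n : ℕ) (v : EuclideanSpace ℝ (Fin n) → EuclideanSpace ℝ (Fin n))
    (hvlip : LocallyLipschitz v) (C : ℝ) (hvbd : ∀ x, ‖v x‖ ≤ C)
    (γ : ℝ → EuclideanSpace ℝ (Fin n)) (hγ : ContDiff ℝ 1 γ)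
    (hpre : IsCompact (closure (Set.range γ)))
    (hasym : Tendsto (fun t => deriv γ t - v (γ t)) atTop (𝓝 0))
    (p : EuclideanSpace ℝ (Fin n))
    (hacc : MapClusterPt p atTop γ)
    (heq : v p = 0)
    (hattr : ∃ U ∈ 𝓝 p, ∀ β : ℝ → EuclideanSpace ℝ (Fin n),
      (∀ t : ℝ, HasDerivAt β (v (β t)) t) → β 0 ∈ U → Tendsto β atTop (𝓝 p))
    (hiso : ∃ U ∈ 𝓝 p, ∀ q, MapClusterPt q atTop γ → q ∈ U → q = p) :
    Tendsto γ atTop (𝓝 p) := by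
  obtain ⟨U, hU, hUiso⟩ := hiso
  obtain ⟨r, hr, hrU⟩ := Metric.nhds_basis_closedBall.mem_iff.mp hU
  have hcont : Continuous γ := hγ.continuous
  rw [Metric.tendsto_nhds]
  intro ε hε
  set δ := min (ε / 2) r with hδdef
  have hδpos : 0 < δ := lt_min (by linarith) hr
  have hδε : δ < ε := lt_of_le_of_lt (min_le_left _ _) (by linarith)
  have hδr : δ ≤ r := min_le_right _ _
  set A := closure (Set.range γ) ∩ (Metric.closedBall p δ \ Metric.ball p (δ / 2))
    with hAdef
  have hAcomp : IsCompact A :=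
    hpre.inter_right (Metric.isClosed_closedBall.inter Metric.isOpen_ball.isClosed_compl)
  -- Step 1: eventually γ t ∉ A
  have hstep1 : ∀ᶠ t in atTop, γ t ∉ A := by
    by_contra h
    have hfreq : ∃ᶠ t in atTop, γ t ∈ A := by
      simpa using (Filter.not_eventually.mp h)
    have hfreq' : ∃ᶠ x in Filter.map γ atTop, x ∈ A := by
      rwa [Filter.frequently_map]
    have hne : (Filter.map γ atTop ⊓ 𝓟 A).NeBot := Filter.frequently_iff_neBot.mp hfreq'
    haveI := hne
    obtain ⟨q, hqA, hq⟩ := hAcomp.exists_clusterPt (f := Filter.map γ atTop ⊓ 𝓟 A) inf_le_right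
    have hqcl : MapClusterPt q atTop γ := hq.mono inf_le_left
    have hqU : q ∈ U := by
      apply hrU
      exact Metric.closedBall_subset_closedBall hδr hqA.2.1
    have hqp := hUiso q hqcl hqU
    rw [hqp] at hqA
    exact hqA.2.2 (Metric.mem_ball_self (by linarith))
  -- Step 2: find t₀ past the threshold with γ t₀ close to p
  obtain ⟨T, hT⟩ := eventually_atTop.mp hstep1
  have hfreq : ∃ᶠ t in atTop, γ t ∈ Metric.ball p (δ / 2) :=
    mapClusterPt_iff_frequently.mp hacc _ (Metric.ball_mem_nhds p (by linarith))
  obtain ⟨t₀, ht₀, ht₀T⟩ := (hfreq.and_eventually (eventually_ge_atTop T)).exists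
  refine eventually_atTop.2 ⟨t₀, fun t ht => ?_⟩
  by_contra hcon
  push_neg at hcon
  -- IVT: γ must cross the annulus
  have hf : ContinuousOn (fun s => dist (γ s) p) (Set.Icc t₀ t) :=
    ((hcont.dist continuous_const)).continuousOn
  have hmem : δ / 2 ∈ Set.Icc (dist (γ t₀) p) (dist (γ t) p) := by
    constructor
    · exact le_of_lt (by simpa [Metric.mem_ball] using ht₀)
    · linarith
  obtain ⟨s, hs, hfs'⟩ := intermediate_value_Icc ht hf hmem
  have hfs : dist (γ s) p = δ / 2 := hfs'
  apply hT s (le_trans ht₀T hs.1)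
  refine ⟨subset_closure (Set.mem_range_self s), ?_, ?_⟩
  · simp only [Metric.mem_closedBall]
    rw [hfs]; linarith
  · simp [Metric.mem_ball, hfs]
end
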